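/- Let H: E × E* → ℝ be of class C¹ with Hamiltonian vector field X_H = (X¹, X²), and let γ: E → E* be a C¹ closed one-form (dγ_q = 0 for all q). Define X_H^γ: E → E by X_H^γ(q) = X¹(q, γ(q)) (the projection to E of X_H along γ). Then the following two assertions are equivalent: (i) X_H^γ and X_H are γ-related, i.e. Dγ̃(q)(X_H^γ(q)) = X_H(q, γ(q)) for all q ∈ E; (ii) D(H ∘ γ̃)(q) = 0 for all q ∈ E, i.e. the function q ↦ H(q, γ(q)) has vanishing derivative (the geometric Hamilton–Jacobi equation d(H∘γ) = 0). -/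

import Mathlib

/-- The canonical symplectic form on `E × E*`. -/
def canSymp (E : Type*) [NormedAddCommGroup E] [NormedSpace ℝ E] :
    (E × (E →L[ℝ] ℝ)) → (E × (E →L[ℝ] ℝ)) → ℝ :=
  fun v w => w.2 v.1 - v.2 w.1

/-- Geometric Hamilton–Jacobi theorem: for a C¹ Hamiltonian `H` on `T*E ≅ E × E*`
with Hamiltonian vector field `X_H = (X¹, X²)`, and a C¹ closed one-form
`γ : E → E*`, set `X_H^γ(q) = X¹(q, γ(q))`. Then the following are equivalent:
(i) `X_H^γ` and `X_H` are `γ`-related: `Dγ̃(q)(X_H^γ(q)) = X_H(q, γ(q))` for all `q`;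
(ii) `d(H ∘ γ̃) = 0`, i.e. `q ↦ H(q, γ(q))` has vanishing derivative. -/
theorem geometric_hamilton_jacobi
    {E : Type*} [NormedAddCommGroup E] [NormedSpace ℝ E] [FiniteDimensional ℝ E]
    (H : E × (E →L[ℝ] ℝ) → ℝ) (hH : ContDiff ℝ 1 H)
    (XH : E × (E →L[ℝ] ℝ) → E × (E →L[ℝ] ℝ))
    (hXH : ∀ z v, canSymp E (XH z) v = fderiv ℝ H z v)
    (γ : E → E →L[ℝ] ℝ) (hγ : ContDiff ℝ 1 γ)
    (hclosed : ∀ q x y : E, fderiv ℝ γ q x y - fderiv ℝ γ q y x = 0) :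
    (∀ q : E,
        (((XH (q, γ q)).1, fderiv ℝ γ q ((XH (q, γ q)).1)) : E × (E →L[ℝ] ℝ))
          = XH (q, γ q))
    ↔ (∀ q : E, fderiv ℝ (fun q' : E => H (q', γ q')) q = 0) := by
  have hHd := hH.differentiable one_ne_zero
  have hγd := hγ.differentiable one_ne_zero
  have key : ∀ q x, fderiv ℝ (fun q' : E => H (q', γ q')) q x
      = fderiv ℝ γ q x ((XH (q, γ q)).1) - (XH (q, γ q)).2 x := by
    intro q x
    have hg : HasFDerivAt (fun q' : E => ((q', γ q') : E × (E →L[ℝ] ℝ)))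
        ((ContinuousLinearMap.id ℝ E).prod (fderiv ℝ γ q)) q :=
      HasFDerivAt.prodMk (hasFDerivAt_id q) (hγd q).hasFDerivAt
    have hc := (hHd (q, γ q)).hasFDerivAt.comp q hg
    rw [show (fun q' : E => H (q', γ q')) = (H ∘ fun q' : E => ((q', γ q') : E × (E →L[ℝ] ℝ))) from rfl, hc.fderiv]
    have h1 := hXH (q, γ q) (x, fderiv ℝ γ q x)
    simp only [canSymp] at h1
    simpa using h1.symm
  constructor
  · intro h q
    ext x
    rw [key q x]
    have h2 : (XH (q, γ q)).2 = fderiv ℝ γ q ((XH (q, γ q)).1) :=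
      (congrArg Prod.snd (h q)).symm
    rw [h2]
    have hc := hclosed q x ((XH (q, γ q)).1)
    simpa using hc
  · intro h q
    refine Prod.ext rfl ?_
    ext x
    have hk := key q x
    rw [h q] at hk
    have hc := hclosed q x ((XH (q, γ q)).1)
    simp only [ContinuousLinearMap.zero_apply] at hk
    linarith
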